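/- Let f : Q → P be an integral homomorphism of fine, sharp monoids. If P has two semistable structures (σ, q₀, Δ, B) and (σ, q₀′, Δ′, B′) over Q with the same underlying set σ, then q₀ = q₀′, Δ = Δ′, and B = B′. Moreover, if f does not split, then the semistable structure of P over Q (if one exists) is unique, including its underlying set σ, which equals the set of all irreducible elements of P not lying in f(Q). -/

import Mathlib

section SemistableMonoid

variable {Q P : Type*} [AddCommMonoid Q] [AddCommMonoid P]

/-- `T·σ = Σ_x T(x)·x` for a finitely supported `T : P →₀ ℕ`. -/
def monDot (T : P →₀ ℕ) : P := T.sum fun x n => n • x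

/-- A commutative monoid is sharp if `x + y = 0` implies `x = y = 0`. -/
def MonSharp (P : Type*) [AddCommMonoid P] : Prop :=
  ∀ x y : P, x + y = 0 → x = 0 ∧ y = 0

/-- An element `x` of a sharp monoid is irreducible if `x = y + z` implies
`y = 0` or `z = 0`. -/
def MonIrreducible (x : P) : Prop := ∀ y z : P, x = y + z → y = 0 ∨ z = 0

/-- A homomorphism of monoids `f : Q → P` is integral if whenever
`f q + p = f q' + p'` there are `q₁, q₂ ∈ Q` and `p'' ∈ P` with `q + q₁ = q' + q₂`,
`p = f q₁ + p''` and `p' = f q₂ + p''`. -/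
def MonIntegralHom (f : Q →+ P) : Prop :=
  ∀ (q q' : Q) (p p' : P), f q + p = f q' + p' →
    ∃ (q₁ q₂ : Q) (p'' : P), q + q₁ = q' + q₂ ∧ p = f q₁ + p'' ∧ p' = f q₂ + p''

/-- `f : Q → P` splits if there is a submonoid `N` of `P` with `P = f(Q) × N`. -/
def MonSplits (f : Q →+ P) : Prop :=
  ∃ N : AddSubmonoid P, Function.Bijective (fun x : Q × N => f x.1 + (x.2 : P))

/-- `P` has a semistable structure `(σ, q₀, Δ, B)` over `Q` (via `f`). -/
def IsSemistableStructure (f : Q →+ P) (σ : Finset P) (q₀ : Q) (Δ B : P →₀ ℕ) : Prop :=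
  -- (S1)
  q₀ ≠ 0 ∧ Δ ≠ 0 ∧ (∀ x, Δ x ≤ 1) ∧
  ↑Δ.support ⊆ (σ : Set P) ∧ ↑B.support ⊆ (σ : Set P) ∧
  -- (S2): `P` is generated by `σ` and `f(Q)`, and `ℕ^σ → P` is injective
  (∀ p : P, ∃ (T : P →₀ ℕ) (q : Q), ↑T.support ⊆ (σ : Set P) ∧ p = monDot T + f q) ∧
  (∀ T T' : P →₀ ℕ, ↑T.support ⊆ (σ : Set P) → ↑T'.support ⊆ (σ : Set P) →
    monDot T = monDot T' → T = T') ∧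
  -- (S3)
  Disjoint Δ.support B.support ∧ monDot Δ = f q₀ + monDot B ∧
  -- (S4)
  (∀ (T T' : P →₀ ℕ) (q : Q), ↑T.support ⊆ (σ : Set P) → ↑T'.support ⊆ (σ : Set P) →
    monDot T = f q + monDot T' → q ≠ 0 → ∀ x ∈ Δ.support, 0 < T x)

end SemistableMonoid



section UniqueHelpers
set_option linter.unusedSectionVars false
set_option maxHeartbeats 1000000

variable {Q P : Type*} [AddCommMonoid Q] [AddCommMonoid P]

lemma monDot_zero : monDot (0 : P →₀ ℕ) = 0 := Finsupp.sum_zero_index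

lemma monDot_single (x : P) (n : ℕ) : monDot (Finsupp.single x n) = n • x :=
  Finsupp.sum_single_index (zero_smul ℕ x)

lemma monDot_add (T T' : P →₀ ℕ) : monDot (T + T') = monDot T + monDot T' :=
  Finsupp.sum_add_index' (fun a => zero_smul ℕ a) (fun a b c => add_smul b c a)

lemma monDot_erase (T : P →₀ ℕ) (x : P) :
    monDot T = T x • x + monDot (T.erase x) := by
  conv_lhs => rw [← Finsupp.single_add_erase x T]
  rw [monDot_add, monDot_single]

lemma monDot_mem_closure {s : Set P} (T : P →₀ ℕ)
    (h : ↑T.support ⊆ s) : monDot T ∈ AddSubmonoid.closure s := by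
  rw [monDot, Finsupp.sum]
  exact AddSubmonoid.sum_mem _ fun x hx =>
    (AddSubmonoid.closure s).nsmul_mem (AddSubmonoid.subset_closure (h hx)) _

lemma exists_finsupp_of_mem_closure {s : Set P} {n : P} (h : n ∈ AddSubmonoid.closure s) :
    ∃ T : P →₀ ℕ, ↑T.support ⊆ s ∧ monDot T = n := by
  classical
  induction h using AddSubmonoid.closure_induction with
  | mem x hx => exact ⟨Finsupp.single x 1, by
      intro y hy
      have := Finsupp.support_single_subset (Finset.mem_coe.mp hy)
      simp only [Finset.mem_singleton] at this
      simpa [this] using hx, by simp [monDot_single]⟩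
  | zero => exact ⟨0, by simp, monDot_zero⟩
  | add a b _ _ iha ihb =>
      obtain ⟨T, hT, hTe⟩ := iha
      obtain ⟨T', hT', hTe'⟩ := ihb
      exact ⟨T + T', by
        intro y hy
        have := Finsupp.support_add (Finset.mem_coe.mp hy)
        simp only [Finset.mem_union] at this
        rcases this with h | h
        · exact hT (Finset.mem_coe.mpr h)
        · exact hT' (Finset.mem_coe.mpr h), by rw [monDot_add, hTe, hTe']⟩

lemma single_one_eq_add {x : P} {T T' : P →₀ ℕ} (h : T + T' = Finsupp.single x 1) :
    (T = Finsupp.single x 1 ∧ T' = 0) ∨ (T = 0 ∧ T' = Finsupp.single x 1) := by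
  have hx : T x + T' x = 1 := by simpa using DFunLike.congr_fun h x
  have hy : ∀ y, y ≠ x → T y = 0 ∧ T' y = 0 := by
    intro y hyx
    have := DFunLike.congr_fun h y
    rw [Finsupp.add_apply, Finsupp.single_eq_of_ne' (Ne.symm hyx)] at this
    omega
  have hsy : ∀ y, y ≠ x → (Finsupp.single x 1 : P →₀ ℕ) y = 0 := fun y hyx =>
    Finsupp.single_eq_of_ne' (Ne.symm hyx)
  rcases Nat.add_eq_one_iff.mp hx with ⟨h1, h2⟩ | ⟨h1, h2⟩
  · refine Or.inr ⟨?_, ?_⟩ <;> ext y <;> by_cases hyx : y = x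
    · subst hyx; simpa using h1
    · simpa [hsy y hyx] using (hy y hyx).1
    · subst hyx; simpa using h2
    · simpa [hsy y hyx] using (hy y hyx).2
  · refine Or.inl ⟨?_, ?_⟩ <;> ext y <;> by_cases hyx : y = x
    · subst hyx; simpa using h1
    · simpa [hsy y hyx] using (hy y hyx).1
    · subst hyx; simpa using h2
    · simpa [hsy y hyx] using (hy y hyx).2

lemma single_support_sub {x : P} {s : Set P} (hx : x ∈ s) (n : ℕ) :
    ↑(Finsupp.single x n).support ⊆ s := by
  intro y hy
  have : y ∈ ({x} : Finset P) := Finsupp.support_single_subset (Finset.mem_coe.mp hy)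
  simp only [Finset.mem_singleton] at this
  subst this; exact hx

variable (f : Q →+ P) {σ : Finset P} {q₀ : Q} {Δ B : P →₀ ℕ}

lemma sss_zero_not_mem (H : IsSemistableStructure f σ q₀ Δ B) : (0 : P) ∉ σ := by
  obtain ⟨-, -, -, -, -, -, hinj, -, -, -⟩ := id H
  intro h0
  have h0' : (0 : P) ∈ (σ : Set P) := Finset.mem_coe.mpr h0
  have key := hinj (Finsupp.single (0 : P) 1) 0 (single_support_sub h0' 1) (by simp)
    (by rw [monDot_single, monDot_zero, smul_zero])
  simpa using DFunLike.congr_fun key 0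

lemma sss_mem_of_irred (H : IsSemistableStructure f σ q₀ Δ B) {x : P}
    (h1 : MonIrreducible x) (h2 : x ∉ Set.range f) : x ∈ σ := by
  obtain ⟨-, -, -, -, -, hgen, -, -, -, -⟩ := id H
  obtain ⟨T, q, hT, hx⟩ := hgen x
  by_cases hT0 : T = 0
  · exact absurd ⟨q, by rw [hT0, monDot_zero, zero_add] at hx; exact hx.symm⟩ h2
  obtain ⟨y, hy⟩ := Finsupp.support_nonempty_iff.mpr hT0
  have hyσ : y ∈ σ := Finset.mem_coe.mp (hT (Finset.mem_coe.mpr hy))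
  have hTy : T y ≠ 0 := Finsupp.mem_support_iff.mp hy
  have hdec : monDot T = y + ((T y - 1) • y + monDot (T.erase y)) := by
    rw [monDot_erase T y]
    have hsm : T y • y = y + (T y - 1) • y := by
      conv_lhs => rw [show T y = 1 + (T y - 1) by omega]
      rw [add_smul, one_smul]
    rw [hsm, add_assoc]
  have hx' : x = y + ((T y - 1) • y + monDot (T.erase y) + f q) := by
    rw [hx, hdec, add_assoc]
  rcases h1 y _ hx' with h | h
  · exact absurd (h ▸ hyσ) (sss_zero_not_mem f H)
  · rw [h, add_zero] at hx'
    rw [hx']; exact hyσ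

lemma sss_splits (hQ : MonSharp Q) (hf : MonIntegralHom f)
    (H : IsSemistableStructure f σ q₀ Δ B) {x : P} (hx : x ∈ (σ : Set P))
    {q : Q} {S : P →₀ ℕ} (hS : ↑S.support ⊆ (σ : Set P))
    (hrel : x = f q + monDot S) (hq : q ≠ 0) : MonSplits f := by
  classical
  obtain ⟨hq₀, hΔne, hΔle, hΔsupp, hBsupp, hgen, hinj, hdisj, hΔB, hS4⟩ := id H
  have hpos : ∀ w ∈ Δ.support, 0 < (Finsupp.single x 1) w :=
    hS4 (Finsupp.single x 1) S q (single_support_sub hx 1) hS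
      (by rw [monDot_single, one_smul]; exact hrel) hq
  have hΔsub : ∀ w ∈ Δ.support, w = x := by
    intro w hw
    by_contra hwx
    have h0 := hpos w hw
    rw [Finsupp.single_eq_of_ne' (fun h => hwx h.symm)] at h0
    omega
  have hxΔ : x ∈ Δ.support := by
    obtain ⟨w, hw⟩ := Finsupp.support_nonempty_iff.mpr hΔne
    exact hΔsub w hw ▸ hw
  have hΔeq : Δ = Finsupp.single x 1 := by
    ext w
    by_cases hwx : w = x
    · subst hwx
      have h1 := hΔle w
      have h2 := Finsupp.mem_support_iff.mp hxΔ
      rw [Finsupp.single_eq_same]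
      omega
    · rw [Finsupp.single_eq_of_ne' (fun h => hwx h.symm)]
      by_contra hne
      exact hwx (hΔsub w (Finsupp.mem_support_iff.mpr hne))
  have hxB : x = f q₀ + monDot B := by
    have := hΔB
    rw [hΔeq, monDot_single, one_smul] at this
    exact this
  have hBx : B x = 0 := by
    by_contra h
    exact (Finset.disjoint_left.mp hdisj hxΔ) (Finsupp.mem_support_iff.mpr h)
  refine ⟨AddSubmonoid.closure ((σ : Set P) \ {x}), ?_, ?_⟩
  · -- injective
    rintro ⟨qa, na⟩ ⟨qb, nb⟩ hab
    simp only at hab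
    obtain ⟨Ta, hTa, hTae⟩ := exists_finsupp_of_mem_closure na.2
    obtain ⟨Tb, hTb, hTbe⟩ := exists_finsupp_of_mem_closure nb.2
    have hTax : Ta x = 0 := Finsupp.notMem_support_iff.mp
      (fun hmem => (hTa (Finset.mem_coe.mpr hmem)).2 rfl)
    have hTbx : Tb x = 0 := Finsupp.notMem_support_iff.mp
      (fun hmem => (hTb (Finset.mem_coe.mpr hmem)).2 rfl)
    obtain ⟨q₁, q₂, p'', he, h1, h2⟩ := hf qa qb _ _ hab
    obtain ⟨S', q'', hS', hp''⟩ := hgen p''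
    have hTa' : monDot Ta = f (q₁ + q'') + monDot S' := by
      rw [hTae, h1, hp'', map_add]; abel
    have hTb' : monDot Tb = f (q₂ + q'') + monDot S' := by
      rw [hTbe, h2, hp'', map_add]; abel
    have hq1 : q₁ + q'' = 0 := by
      by_contra h
      have := hS4 Ta S' (q₁ + q'') (hTa.trans Set.diff_subset) hS' hTa' h x hxΔ
      omega
    have hq2 : q₂ + q'' = 0 := by
      by_contra h
      have := hS4 Tb S' (q₂ + q'') (hTb.trans Set.diff_subset) hS' hTb' h x hxΔ
      omega
    obtain ⟨e1, e2⟩ := hQ _ _ hq1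
    obtain ⟨e3, e4⟩ := hQ _ _ hq2
    have hqq : qa = qb := by rwa [e1, e3, add_zero, add_zero] at he
    have hnn : (na : P) = (nb : P) := by
      rw [h1, h2, e1, e3]
    simp only [Prod.mk.injEq]
    exact ⟨hqq, Subtype.ext hnn⟩
  · -- surjective
    intro p
    obtain ⟨T, q', hT, hp⟩ := hgen p
    have hBsub : ↑B.support ⊆ (σ : Set P) \ {x} := by
      intro y hy
      refine ⟨hBsupp hy, fun h => ?_⟩
      have : y = x := h
      exact Finsupp.mem_support_iff.mp (Finset.mem_coe.mp hy) (this ▸ hBx)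
    have hEsub : ↑(T.erase x).support ⊆ (σ : Set P) \ {x} := by
      intro y hy
      rw [Finsupp.support_erase, Finset.coe_erase] at hy
      exact ⟨hT hy.1, hy.2⟩
    have hmem : T x • monDot B + monDot (T.erase x) ∈
        AddSubmonoid.closure ((σ : Set P) \ {x}) :=
      AddSubmonoid.add_mem _
        ((AddSubmonoid.closure _).nsmul_mem (monDot_mem_closure B hBsub) _)
        (monDot_mem_closure _ hEsub)
    refine ⟨(q' + T x • q₀, ⟨_, hmem⟩), ?_⟩
    show f (q' + T x • q₀) + (T x • monDot B + monDot (T.erase x)) = p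
    have h2 : ∀ n : ℕ, n • x = n • f q₀ + n • monDot B := fun n => by
      rw [hxB, smul_add]
    rw [hp, monDot_erase T x, h2 (T x), map_add, map_nsmul]
    abel

lemma sss_irred_of_mem (hQ : MonSharp Q) (hf : MonIntegralHom f)
    (hns : ¬ MonSplits f) (H : IsSemistableStructure f σ q₀ Δ B) {x : P}
    (hx : x ∈ σ) : MonIrreducible x ∧ x ∉ Set.range f := by
  classical
  obtain ⟨-, -, -, -, -, hgen, hinj, -, -, -⟩ := id H
  have hx' : x ∈ (σ : Set P) := Finset.mem_coe.mpr hx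
  constructor
  · intro y z hyz
    obtain ⟨T, q, hT, hy⟩ := hgen y
    obtain ⟨T', q', hT', hz⟩ := hgen z
    have hxx : x = f (q + q') + monDot (T + T') := by
      rw [hyz, hy, hz, map_add, monDot_add]; abel
    have hsum : ↑(T + T').support ⊆ (σ : Set P) := by
      intro w hw
      rcases Finset.mem_union.mp (Finsupp.support_add (Finset.mem_coe.mp hw)) with h | h
      · exact hT (Finset.mem_coe.mpr h)
      · exact hT' (Finset.mem_coe.mpr h)
    by_cases hqq : q + q' = 0
    · obtain ⟨hq0, hq'0⟩ := hQ _ _ hqq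
      have hkey : Finsupp.single x 1 = T + T' :=
        hinj _ _ (single_support_sub hx' 1) hsum
          (by rw [monDot_single, one_smul, hxx, hqq, map_zero, zero_add])
      rcases single_one_eq_add hkey.symm with ⟨h1, h2⟩ | ⟨h1, h2⟩
      · right; rw [hz, h2, monDot_zero, hq'0, map_zero, add_zero]
      · left; rw [hy, h1, monDot_zero, hq0, map_zero, add_zero]
    · exact absurd (sss_splits f hQ hf H hx' hsum hxx hqq) hns
  · rintro ⟨q, hq⟩
    by_cases hq0 : q = 0
    · exact sss_zero_not_mem f H (by rwa [← hq, hq0, map_zero] at hx)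
    · exact hns (sss_splits f hQ hf H hx' (S := 0) (by simp)
        (by rw [← hq, monDot_zero, add_zero]) hq0)

lemma sss_part1 (hQ : MonSharp Q) (hf : MonIntegralHom f)
    {σ : Finset P} {q₀ q₀' : Q} {Δ B Δ' B' : P →₀ ℕ}
    (H : IsSemistableStructure f σ q₀ Δ B) (H' : IsSemistableStructure f σ q₀' Δ' B') :
    q₀ = q₀' ∧ Δ = Δ' ∧ B = B' := by
  obtain ⟨hq₀, hΔne, hΔle, hΔsupp, hBsupp, hgen, hinj, hdisj, hΔB, hS4⟩ := id H
  obtain ⟨hq₀', hΔne', hΔle', hΔsupp', hBsupp', hgen', hinj', hdisj', hΔB', hS4'⟩ := id H'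
  have h1 : ∀ w ∈ Δ'.support, 0 < Δ w := hS4' Δ B q₀ hΔsupp hBsupp hΔB hq₀
  have h2 : ∀ w ∈ Δ.support, 0 < Δ' w := hS4 Δ' B' q₀' hΔsupp' hBsupp' hΔB' hq₀'
  have hΔΔ : Δ = Δ' := by
    ext w
    have a1 := hΔle w
    have a2 := hΔle' w
    have b1 : Δ' w ≠ 0 → 0 < Δ w := fun h => h1 w (Finsupp.mem_support_iff.mpr h)
    have b2 : Δ w ≠ 0 → 0 < Δ' w := fun h => h2 w (Finsupp.mem_support_iff.mpr h)
    omega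
  have hkey : f q₀ + monDot B = f q₀' + monDot B' := by rw [← hΔB, hΔΔ, hΔB']
  obtain ⟨q₁, q₂, p'', he, hb, hb'⟩ := hf q₀ q₀' (monDot B) (monDot B') hkey
  obtain ⟨S, q'', hS, hp''⟩ := hgen p''
  have hB1 : monDot B = f (q₁ + q'') + monDot S := by rw [hb, hp'', map_add]; abel
  have hB2 : monDot B' = f (q₂ + q'') + monDot S := by rw [hb', hp'', map_add]; abel
  obtain ⟨w, hw⟩ := Finsupp.support_nonempty_iff.mpr hΔne
  have hwB : B w = 0 := Finsupp.notMem_support_iff.mp (Finset.disjoint_left.mp hdisj hw)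
  have hwB' : B' w = 0 := Finsupp.notMem_support_iff.mp
    (Finset.disjoint_left.mp hdisj' (hΔΔ ▸ hw))
  have hq1 : q₁ + q'' = 0 := by
    by_contra h
    have := hS4 B S (q₁ + q'') hBsupp hS hB1 h w hw
    omega
  have hq2 : q₂ + q'' = 0 := by
    by_contra h
    have := hS4' B' S (q₂ + q'') hBsupp' hS hB2 h w (hΔΔ ▸ hw)
    omega
  refine ⟨?_, hΔΔ, ?_⟩
  · obtain ⟨e1, -⟩ := hQ _ _ hq1
    obtain ⟨e3, -⟩ := hQ _ _ hq2
    rwa [e1, e3, add_zero, add_zero] at he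
  · exact hinj B B' hBsupp hBsupp' (by rw [hB1, hB2, hq1, hq2])

end UniqueHelpers

/-- Uniqueness of semistable structures: two semistable structures of `P` over `Q`
with the same underlying set `σ` have equal `q₀`, `Δ` and `B`; moreover, if `f` does
not split, then the semistable structure (if one exists) is unique, including its
underlying set `σ`, which is the set of all irreducible elements of `P` not lying
in `f(Q)`. -/
theorem semistable_structure_unique
    {Q P : Type*} [AddCancelCommMonoid Q] [AddCancelCommMonoid P]
    [AddMonoid.FG Q] [AddMonoid.FG P]
    (hQ : MonSharp Q) (hP : MonSharp P)
    (f : Q →+ P) (hf : MonIntegralHom f) :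
    (∀ (σ : Finset P) (q₀ q₀' : Q) (Δ B Δ' B' : P →₀ ℕ),
      IsSemistableStructure f σ q₀ Δ B → IsSemistableStructure f σ q₀' Δ' B' →
      q₀ = q₀' ∧ Δ = Δ' ∧ B = B') ∧
    (¬ MonSplits f →
      ∀ (σ σ' : Finset P) (q₀ q₀' : Q) (Δ B Δ' B' : P →₀ ℕ),
        IsSemistableStructure f σ q₀ Δ B → IsSemistableStructure f σ' q₀' Δ' B' →
        σ = σ' ∧ q₀ = q₀' ∧ Δ = Δ' ∧ B = B' ∧
        (σ : Set P) = {x : P | MonIrreducible x ∧ x ∉ Set.range f}) := by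
  constructor
  · intro σ q₀ q₀' Δ B Δ' B' H H'
    exact sss_part1 f hQ hf H H'
  · intro hns σ σ' q₀ q₀' Δ B Δ' B' H H'
    have hset : (σ : Set P) = {x : P | MonIrreducible x ∧ x ∉ Set.range f} := by
      ext x
      exact ⟨fun h => sss_irred_of_mem f hQ hf hns H (Finset.mem_coe.mp h),
        fun h => Finset.mem_coe.mpr (sss_mem_of_irred f H h.1 h.2)⟩
    have hset' : (σ' : Set P) = {x : P | MonIrreducible x ∧ x ∉ Set.range f} := by
      ext x
      exact ⟨fun h => sss_irred_of_mem f hQ hf hns H' (Finset.mem_coe.mp h),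
        fun h => Finset.mem_coe.mpr (sss_mem_of_irred f H' h.1 h.2)⟩
    have hσσ : σ = σ' := Finset.coe_injective (hset.trans hset'.symm)
    subst hσσ
    obtain ⟨e1, e2, e3⟩ := sss_part1 f hQ hf H H'
    exact ⟨rfl, e1, e2, e3, hset⟩
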